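/- arXiv:1412.1761 — 6 statements merged into one kernel-verified Lean document; each statement's English description precedes it below -/
import Mathlib

section
/- The set of generating divided power series of nontrivial binomial-type sequences over a field F forms an abelian group under multiplication: it is closed under products, contains 1, and every element has an inverse whose coefficients are polynomials. -/
open Finset Polynomial

/-- Multiplication in the divided power series ring `R{{𝔇}}`, written coefficientwise:
`(a·b)_n = ∑ C(n,i) a_i b_{n-i}`, corresponding to `𝔇_i·𝔇_j = C(i+j,j) 𝔇_{i+j}`. -/
def dpMul {R : Type*} [CommRing R] (a b : ℕ → R) : ℕ → R :=
  fun n => ∑ i ∈ Finset.range (n + 1), (n.choose i : R) * a i * b (n - i)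

/-- The unit `1 = 𝔇_0` of the divided power series ring. -/
def dpOne (R : Type*) [CommRing R] : ℕ → R := fun n => if n = 0 then 1 else 0

/-- A sequence of polynomials satisfies the Binomial Theorem:
`p_n(x+y) = ∑_{i=0}^n C(n,i) p_i(x) p_{n-i}(y)` in `F[x,y]`. -/
def IsBinomialSeq {F : Type*} [Field F] (p : ℕ → Polynomial F) : Prop :=
  ∀ n : ℕ,
    Polynomial.aeval (MvPolynomial.X 0 + MvPolynomial.X 1 : MvPolynomial (Fin 2) F) (p n) =
      ∑ i ∈ Finset.range (n + 1), (n.choose i : MvPolynomial (Fin 2) F) *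
        Polynomial.aeval (MvPolynomial.X 0 : MvPolynomial (Fin 2) F) (p i) *
        Polynomial.aeval (MvPolynomial.X 1 : MvPolynomial (Fin 2) F) (p (n - i))


section Ring
variable {R : Type*} [CommRing R] {S : Type*} [CommRing S]

theorem dpMul_apply_zero (a b : ℕ → R) : dpMul a b 0 = a 0 * b 0 := by
  simp [dpMul]

theorem dpMul_comm (a b : ℕ → R) : dpMul a b = dpMul b a := by
  funext n
  show ∑ i ∈ Finset.range (n + 1), (n.choose i : R) * a i * b (n - i)
      = ∑ i ∈ Finset.range (n + 1), (fun i => (n.choose i : R) * b i * a (n - i)) i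
  rw [← Finset.sum_range_reflect]
  refine Finset.sum_congr rfl fun i hi => ?_
  rw [Finset.mem_range, Nat.lt_succ_iff] at hi
  simp only [Nat.add_sub_cancel]
  rw [Nat.sub_sub_self hi, Nat.choose_symm hi]
  ring

theorem dpMul_one (a : ℕ → R) : dpMul a (dpOne R) = a := by
  funext n
  show ∑ i ∈ Finset.range (n + 1), (n.choose i : R) * a i * dpOne R (n - i) = a n
  rw [Finset.sum_eq_single n]
  · simp [dpOne]
  · intro i hi hne
    rw [Finset.mem_range, Nat.lt_succ_iff] at hi
    have : n - i ≠ 0 := by omega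
    simp [dpOne, this]
  · intro h; exact absurd (Finset.self_mem_range_succ n) h

theorem one_dpMul (a : ℕ → R) : dpMul (dpOne R) a = a := by
  rw [dpMul_comm]; exact dpMul_one a

theorem trinom {n i j : ℕ} (h : i + j ≤ n) :
    n.choose (i + j) * (i + j).choose i = n.choose i * (n - i).choose j := by
  have hin : i ≤ n := le_trans (Nat.le_add_right i j) h
  have hj : j ≤ n - i := by omega
  have key : n.choose (i + j) * (i + j).choose i * (i.factorial * j.factorial * (n - i - j).factorial)
      = n.choose i * (n - i).choose j * (i.factorial * j.factorial * (n - i - j).factorial) := by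
    have h1 := Nat.choose_mul_factorial_mul_factorial h
    have h2 := Nat.choose_mul_factorial_mul_factorial (Nat.le_add_right i j)
    have h3 := Nat.choose_mul_factorial_mul_factorial hin
    have h4 := Nat.choose_mul_factorial_mul_factorial hj
    have e1 : n - (i + j) = n - i - j := by omega
    have e2 : (i + j) - i = j := by omega
    calc n.choose (i + j) * (i + j).choose i * (i.factorial * j.factorial * (n - i - j).factorial)
        = n.choose (i + j) * ((i + j).choose i * i.factorial * j.factorial) * (n - i - j).factorial := by ring
      _ = n.choose (i + j) * (i + j).factorial * (n - i - j).factorial := by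
            rw [e2] at h2; rw [← h2]
      _ = n.factorial := by rw [← e1]; exact h1
      _ = n.choose i * i.factorial * (n - i).factorial := h3.symm
      _ = n.choose i * i.factorial * ((n - i).choose j * j.factorial * (n - i - j).factorial) := by rw [h4]
      _ = n.choose i * (n - i).choose j * (i.factorial * j.factorial * (n - i - j).factorial) := by ring
  exact Nat.eq_of_mul_eq_mul_right (by positivity) key

theorem dpMul_assoc (a b c : ℕ → R) : dpMul (dpMul a b) c = dpMul a (dpMul b c) := by
  funext n
  show ∑ m ∈ Finset.range (n + 1), (n.choose m : R) *
        (∑ i ∈ Finset.range (m + 1), (m.choose i : R) * a i * b (m - i)) * c (n - m)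
      = ∑ i ∈ Finset.range (n + 1), (n.choose i : R) * a i *
        (∑ j ∈ Finset.range (n - i + 1), ((n - i).choose j : R) * b j * c (n - i - j))
  have lhs : ∀ m ∈ Finset.range (n + 1),
      (n.choose m : R) * (∑ i ∈ Finset.range (m + 1), (m.choose i : R) * a i * b (m - i)) * c (n - m)
      = ∑ i ∈ Finset.range (m + 1), (n.choose m : R) * (m.choose i : R) * a i * b (m - i) * c (n - m) := by
    intro m _
    rw [Finset.mul_sum, Finset.sum_mul]
    exact Finset.sum_congr rfl fun i _ => by ring
  rw [Finset.sum_congr rfl lhs]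
  rw [Finset.sum_comm' (s := Finset.range (n+1)) (t := fun m => Finset.range (m+1))
      (t' := Finset.range (n+1)) (s' := fun i => Finset.Ico i (n+1))
      (by intro m i; simp [Finset.mem_range, Finset.mem_Ico]; omega)]
  refine Finset.sum_congr rfl fun i hi => ?_
  rw [Finset.mem_range, Nat.lt_succ_iff] at hi
  rw [Finset.sum_Ico_eq_sum_range]
  have hrange : n + 1 - i = n - i + 1 := by omega
  rw [hrange, Finset.mul_sum]
  refine Finset.sum_congr rfl fun j hj => ?_
  rw [Finset.mem_range, Nat.lt_succ_iff] at hj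
  have hij : i + j ≤ n := by omega
  have e1 : i + j - i = j := by omega
  have e2 : n - (i + j) = n - i - j := by omega
  have e3 : (n.choose (i + j) : R) * ((i + j).choose i : R) = (n.choose i : R) * ((n - i).choose j : R) := by
    rw [← Nat.cast_mul, ← Nat.cast_mul, trinom hij]
  rw [e1, e2]
  calc (n.choose (i+j) : R) * ((i+j).choose i : R) * a i * b j * c (n - i - j)
      = ((n.choose (i+j) : R) * ((i+j).choose i : R)) * (a i * b j * c (n - i - j)) := by ring
    _ = ((n.choose i : R) * ((n - i).choose j : R)) * (a i * b j * c (n - i - j)) := by rw [e3]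
    _ = (n.choose i : R) * a i * (((n - i).choose j : R) * b j * c (n - i - j)) := by ring

theorem dpMul_map {T : Type*} [FunLike T R S] [RingHomClass T R S] (φ : T) (a b : ℕ → R) :
    (fun n => φ (dpMul a b n)) = dpMul (fun n => φ (a n)) (fun n => φ (b n)) := by
  funext n
  simp [dpMul, map_sum, map_mul, map_natCast]

theorem dpOne_map {T : Type*} [FunLike T R S] [RingHomClass T R S] (φ : T) :
    (fun n => φ (dpOne R n)) = dpOne S := by
  funext n
  by_cases h : n = 0 <;> simp [dpOne, h]

theorem dpInv_unique {a b c : ℕ → R} (hab : dpMul a b = dpOne R) (hac : dpMul a c = dpOne R) :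
    b = c := by
  calc b = dpMul b (dpOne R) := (dpMul_one b).symm
    _ = dpMul b (dpMul a c) := by rw [hac]
    _ = dpMul (dpMul b a) c := (dpMul_assoc b a c).symm
    _ = dpMul (dpMul a b) c := by rw [dpMul_comm b a]
    _ = dpMul (dpOne R) c := by rw [hab]
    _ = c := one_dpMul c

theorem dpMul_mul_mul_comm (a b c d : ℕ → R) :
    dpMul (dpMul a b) (dpMul c d) = dpMul (dpMul a c) (dpMul b d) := by
  rw [dpMul_assoc a b (dpMul c d), dpMul_assoc a c (dpMul b d)]
  exact congrArg (dpMul a)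
    (by rw [← dpMul_assoc b c d, ← dpMul_assoc c b d, dpMul_comm b c])

end Ring


section Bin
variable {F : Type*} [Field F]

/-- The alg hom sending `X0 ↦ X`, `X1 ↦ 0`. -/
noncomputable def psi0 (F : Type*) [Field F] : MvPolynomial (Fin 2) F →ₐ[F] Polynomial F :=
  MvPolynomial.aeval ![Polynomial.X, 0]

/-- The alg hom sending `X0 ↦ X`, `X1 ↦ -X`. -/
noncomputable def psi1 (F : Type*) [Field F] : MvPolynomial (Fin 2) F →ₐ[F] Polynomial F :=
  MvPolynomial.aeval ![Polynomial.X, -Polynomial.X]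

theorem psi0_add : psi0 F (MvPolynomial.X 0 + MvPolynomial.X 1) = Polynomial.X := by
  simp [psi0]

theorem psi1_add : psi1 F (MvPolynomial.X 0 + MvPolynomial.X 1) = 0 := by
  simp [psi1]

theorem binSeq_zero_eq_one {p : ℕ → Polynomial F} (h : IsBinomialSeq p)
    (hnt : ∃ i, p i ≠ 0) : p 0 = 1 := by
  -- first : if p 0 = 0 then everything vanishes
  have hall : p 0 = 0 → ∀ n, p n = 0 := by
    intro h0 n
    induction n using Nat.strong_induction_on with
    | _ n ih =>
      rcases Nat.eq_zero_or_pos n with rfl | hn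
      · exact h0
      · have hz : Polynomial.aeval
            (MvPolynomial.X 0 + MvPolynomial.X 1 : MvPolynomial (Fin 2) F) (p n) = 0 := by
          rw [h n]
          apply Finset.sum_eq_zero
          intro i hi
          rcases Nat.eq_zero_or_pos i with rfl | hi0
          · simp [h0]
          · rw [Finset.mem_range, Nat.lt_succ_iff] at hi
            have : p (n - i) = 0 := ih (n - i) (by omega)
            simp [this]
        have := congrArg (psi0 F) hz
        rw [map_zero, ← Polynomial.aeval_algHom_apply, psi0_add] at this
        rwa [Polynomial.aeval_X_left_apply] at this
  by_contra hne
  have hp0 : p 0 ≠ 0 := fun h0 => by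
    obtain ⟨i, hi⟩ := hnt; exact hi (hall h0 i)
  -- equation at n = 0
  have h0 := h 0
  rw [Finset.sum_range_one] at h0
  simp only [Nat.choose_self, Nat.cast_one, one_mul, Nat.sub_zero] at h0
  -- apply psi1
  have h1 := congrArg (psi1 F) h0
  rw [← Polynomial.aeval_algHom_apply, psi1_add, map_mul,
    ← Polynomial.aeval_algHom_apply, ← Polynomial.aeval_algHom_apply] at h1
  have e0 : psi1 F (MvPolynomial.X 0) = Polynomial.X := by simp [psi1]
  have e1 : psi1 F (MvPolynomial.X 1) = -Polynomial.X := by simp [psi1]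
  rw [e0, e1, Polynomial.aeval_X_left_apply] at h1
  -- h1 : aeval 0 (p 0) = p 0 * aeval (-X) (p 0)
  set r := Polynomial.aeval (-Polynomial.X : Polynomial F) (p 0) with hr
  have hrne : r ≠ 0 := by
    intro h2
    have := congrArg (Polynomial.aeval (-Polynomial.X : Polynomial F)) h2
    rw [hr, ← Polynomial.aeval_algHom_apply (Polynomial.aeval (-Polynomial.X : Polynomial F))] at this
    simp only [map_neg, Polynomial.aeval_X, neg_neg, map_zero] at this
    rw [Polynomial.aeval_X_left_apply] at this
    exact hp0 this
  have hdeg : (p 0).natDegree = 0 := by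
    have hL : (Polynomial.aeval (0 : Polynomial F) (p 0)).natDegree = 0 := by
      rw [Polynomial.aeval_def, Polynomial.eval₂_at_zero]
      exact Polynomial.natDegree_C _
    rw [h1, Polynomial.natDegree_mul hp0 hrne] at hL
    omega
  obtain ⟨a, ha⟩ := Polynomial.natDegree_eq_zero.mp hdeg
  have hane : a ≠ 0 := fun h2 => hp0 (by rw [← ha, h2, map_zero])
  -- plug into h0
  rw [← ha] at h0
  simp only [Polynomial.aeval_C] at h0
  have haa : a * a = a := by
    have h2 : MvPolynomial.C (a * a) = (MvPolynomial.C a : MvPolynomial (Fin 2) F) := by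
      rw [map_mul]
      simpa [MvPolynomial.algebraMap_eq] using h0.symm
    exact MvPolynomial.C_injective _ _ h2
  have haone : a = 1 := mul_left_cancel₀ hane (by rw [haa, mul_one])
  exact hne (by rw [← ha, haone, map_one])

end Bin


noncomputable def dpInv {R : Type*} [CommRing R] (p : ℕ → R) : ℕ → R
  | 0 => 1
  | n + 1 => -∑ i ∈ (Finset.range (n + 1)).attach,
      ((n + 1).choose i.1 : R) * p (n + 1 - i.1) * dpInv p i.1
  decreasing_by exact Finset.mem_range.mp i.2

section Inv
variable {R : Type*} [CommRing R]

theorem dpInv_zero (p : ℕ → R) : dpInv p 0 = 1 := by rw [dpInv]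

theorem dpInv_succ (p : ℕ → R) (n : ℕ) :
    dpInv p (n + 1) = -∑ i ∈ Finset.range (n + 1),
      ((n + 1).choose i : R) * p (n + 1 - i) * dpInv p i := by
  rw [dpInv]
  congr 1
  exact Finset.sum_attach (Finset.range (n + 1))
    (fun i => ((n + 1).choose i : R) * p (n + 1 - i) * dpInv p i)

theorem dpMul_dpInv (p : ℕ → R) (hp0 : p 0 = 1) : dpMul p (dpInv p) = dpOne R := by
  funext n
  cases n with
  | zero =>
    rw [dpMul_apply_zero, hp0, dpInv_zero]
    simp [dpOne]
  | succ n =>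
    show ∑ i ∈ Finset.range (n + 2), ((n + 1).choose i : R) * p i * dpInv p (n + 1 - i)
        = dpOne R (n + 1)
    have hone : dpOne R (n + 1) = 0 := by simp [dpOne]
    rw [hone, Finset.sum_range_succ']
    have hsum : ∑ i ∈ Finset.range (n + 1),
        ((n + 1).choose (i + 1) : R) * p (i + 1) * dpInv p (n + 1 - (i + 1))
        = -dpInv p (n + 1) := by
      rw [dpInv_succ, neg_neg]
      have := Finset.sum_range_reflect
        (fun i => ((n + 1).choose i : R) * p (n + 1 - i) * dpInv p i) (n + 1)
      rw [← this]
      refine Finset.sum_congr rfl fun i hi => ?_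
      rw [Finset.mem_range, Nat.lt_succ_iff] at hi
      have e1 : n + 1 - 1 - i = n - i := by omega
      have e2 : n + 1 - (n - i) = i + 1 := by omega
      have e3 : n + 1 - (i + 1) = n - i := by omega
      have e4 : (n + 1).choose (n - i) = (n + 1).choose (i + 1) := by
        have : n - i = n + 1 - (i + 1) := by omega
        rw [this, Nat.choose_symm (by omega)]
      rw [e1, e2, e3, e4]
    rw [hsum]
    simp [hp0]

end Inv

theorem isBinomialSeq_iff {F : Type*} [Field F] (p : ℕ → Polynomial F) :
    IsBinomialSeq p ↔
      (fun n => Polynomial.aeval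
          (MvPolynomial.X 0 + MvPolynomial.X 1 : MvPolynomial (Fin 2) F) (p n)) =
        dpMul (fun n => Polynomial.aeval (MvPolynomial.X 0 : MvPolynomial (Fin 2) F) (p n))
          (fun n => Polynomial.aeval (MvPolynomial.X 1 : MvPolynomial (Fin 2) F) (p n)) := by
  constructor
  · intro h; funext n; exact h n
  · intro h n; exact congrFun h n


/-- The generating series of nontrivial binomial-type sequences form an abelian group under
multiplication in `F[x]{{𝔇}}`: closed under products, containing `1`, with inverses having
polynomial coefficients. -/
theorem stmt3 {F : Type*} [Field F] :
    (∀ p q : ℕ → Polynomial F, IsBinomialSeq p → (∃ i, p i ≠ 0) →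
      IsBinomialSeq q → (∃ i, q i ≠ 0) →
        IsBinomialSeq (dpMul p q) ∧ ∃ i, dpMul p q i ≠ 0) ∧
    (IsBinomialSeq (dpOne (Polynomial F)) ∧ ∃ i, dpOne (Polynomial F) i ≠ 0) ∧
    (∀ p : ℕ → Polynomial F, IsBinomialSeq p → (∃ i, p i ≠ 0) →
      ∃ g : ℕ → Polynomial F, IsBinomialSeq g ∧ (∃ i, g i ≠ 0) ∧
        ∀ n, dpMul p g n = dpOne (Polynomial F) n) := by
  refine ⟨?_, ⟨?_, ?_⟩, ?_⟩
  · -- closure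
    intro p q hp hnp hq hnq
    have hp0 := binSeq_zero_eq_one hp hnp
    have hq0 := binSeq_zero_eq_one hq hnq
    constructor
    · rw [isBinomialSeq_iff] at hp hq ⊢
      calc (fun n => Polynomial.aeval
            (MvPolynomial.X 0 + MvPolynomial.X 1 : MvPolynomial (Fin 2) F) (dpMul p q n))
          = dpMul (fun n => Polynomial.aeval
              (MvPolynomial.X 0 + MvPolynomial.X 1 : MvPolynomial (Fin 2) F) (p n))
            (fun n => Polynomial.aeval
              (MvPolynomial.X 0 + MvPolynomial.X 1 : MvPolynomial (Fin 2) F) (q n)) :=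
          dpMul_map _ p q
        _ = dpMul
              (dpMul (fun n => Polynomial.aeval (MvPolynomial.X 0 : MvPolynomial (Fin 2) F) (p n))
                (fun n => Polynomial.aeval (MvPolynomial.X 1 : MvPolynomial (Fin 2) F) (p n)))
              (dpMul (fun n => Polynomial.aeval (MvPolynomial.X 0 : MvPolynomial (Fin 2) F) (q n))
                (fun n => Polynomial.aeval (MvPolynomial.X 1 : MvPolynomial (Fin 2) F) (q n))) := by
            rw [hp, hq]
        _ = dpMul
              (dpMul (fun n => Polynomial.aeval (MvPolynomial.X 0 : MvPolynomial (Fin 2) F) (p n))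
                (fun n => Polynomial.aeval (MvPolynomial.X 0 : MvPolynomial (Fin 2) F) (q n)))
              (dpMul (fun n => Polynomial.aeval (MvPolynomial.X 1 : MvPolynomial (Fin 2) F) (p n))
                (fun n => Polynomial.aeval (MvPolynomial.X 1 : MvPolynomial (Fin 2) F) (q n))) :=
            dpMul_mul_mul_comm _ _ _ _
        _ = dpMul (fun n => Polynomial.aeval (MvPolynomial.X 0 : MvPolynomial (Fin 2) F) (dpMul p q n))
              (fun n => Polynomial.aeval (MvPolynomial.X 1 : MvPolynomial (Fin 2) F) (dpMul p q n)) := by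
            rw [← dpMul_map (Polynomial.aeval (MvPolynomial.X 0 : MvPolynomial (Fin 2) F)) p q,
              ← dpMul_map (Polynomial.aeval (MvPolynomial.X 1 : MvPolynomial (Fin 2) F)) p q]
    · exact ⟨0, by rw [dpMul_apply_zero, hp0, hq0, one_mul]; exact one_ne_zero⟩
  · -- dpOne is binomial
    rw [isBinomialSeq_iff]
    have h1 : ∀ u : MvPolynomial (Fin 2) F,
        (fun n => Polynomial.aeval u (dpOne (Polynomial F) n)) = dpOne (MvPolynomial (Fin 2) F) :=
      fun u => dpOne_map (R := Polynomial F) (Polynomial.aeval u)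
    rw [h1, h1, h1, dpMul_one]
  · exact ⟨0, by simp [dpOne]⟩
  · -- inverses
    intro p hp hnp
    have hp0 := binSeq_zero_eq_one hp hnp
    have hpg : dpMul p (dpInv p) = dpOne (Polynomial F) := dpMul_dpInv p hp0
    have key : ∀ u : MvPolynomial (Fin 2) F,
        dpMul (fun n => Polynomial.aeval u (p n)) (fun n => Polynomial.aeval u (dpInv p n))
          = dpOne (MvPolynomial (Fin 2) F) := by
      intro u
      rw [← dpMul_map (Polynomial.aeval u) p (dpInv p), hpg,
        dpOne_map (R := Polynomial F) (Polynomial.aeval u)]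
    refine ⟨dpInv p, ?_, ⟨0, by rw [dpInv_zero]; exact one_ne_zero⟩,
      fun n => congrFun hpg n⟩
    rw [isBinomialSeq_iff] at hp ⊢
    refine dpInv_unique (a := fun n => Polynomial.aeval
      (MvPolynomial.X 0 + MvPolynomial.X 1 : MvPolynomial (Fin 2) F) (p n)) (key _) ?_
    rw [hp, dpMul_mul_mul_comm, key _, key _, dpMul_one]
end

section
/- (Lucas' theorem) Let p be prime, q = p^λ with λ ≥ 1, and let m = Σ m_i q^i, n = Σ n_i q^i be base-q expansions with m ≥ n. Then C(m,n) ≡ Π_i C(m_i, n_i) (mod p). -/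
open Finset

lemma lucas_step (p lam q : ℕ) (hp : p.Prime) (hl : 1 ≤ lam) (hq : q = p ^ lam)
    (a b c d : ℕ) (hb : b < q) (hd : d < q) :
    (((a * q + b).choose (c * q + d) : ZMod p)) = (a.choose c : ZMod p) * (b.choose d) := by
  haveI : Fact p.Prime := ⟨hp⟩
  subst hq
  have hpos : 0 < p ^ lam := pow_pos hp.pos lam
  have h1 : ∀ x y : ℕ, y < p ^ lam → (x * p ^ lam + y) / p ^ lam = x := by
    intro x y hy
    rw [add_comm, mul_comm, Nat.add_mul_div_left _ _ hpos, Nat.div_eq_of_lt hy, zero_add]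
  have h2 : ∀ x y : ℕ, y < p ^ lam → ∀ i < lam, (x * p ^ lam + y) / p ^ i % p = y / p ^ i % p := by
    intro x y hy i hi
    have e : x * p ^ lam + y = y + p ^ i * (x * p ^ (lam - i)) := by
      rw [add_comm]; congr 1
      rw [← mul_assoc, mul_comm (p ^ i), mul_assoc, ← pow_add]
      congr 2; omega
    rw [e, Nat.add_mul_div_left _ _ (pow_pos hp.pos i)]
    have h3 : x * p ^ (lam - i) = x * p ^ (lam - i - 1) * p := by
      rw [mul_assoc, ← pow_succ]; congr 2; omega
    rw [h3, Nat.add_mul_mod_self_right]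
  have key := Choose.choose_modEq_choose_mul_prod_range_choose
    (n := a * p ^ lam + b) (k := c * p ^ lam + d) (p := p) lam
  rw [h1 a b hb, h1 c d hd] at key
  have prodeq : ∏ i ∈ range lam,
        ((a * p ^ lam + b) / p ^ i % p).choose ((c * p ^ lam + d) / p ^ i % p)
      = ∏ i ∈ range lam, (b / p ^ i % p).choose (d / p ^ i % p) := by
    refine Finset.prod_congr rfl fun i hi => ?_
    rw [h2 a b hb i (mem_range.mp hi), h2 c d hd i (mem_range.mp hi)]
  rw [prodeq] at key
  have key2 := Choose.choose_modEq_prod_range_choose (p := p) hb hd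
  have e1 := (ZMod.intCast_eq_intCast_iff _ _ _).mpr key
  have e2 := (ZMod.intCast_eq_intCast_iff _ _ _).mpr key2
  push_cast at e1 e2
  rw [e1, ← e2]

/-- Lucas' theorem, base `q = p^λ`: if `m = ∑ m_i q^i` and `n = ∑ n_i q^i` with digits `< q`
and `m ≥ n`, then `C(m,n) ≡ ∏_i C(m_i, n_i) (mod p)`. -/
theorem stmt4 (p lam q : ℕ) (hp : p.Prime) (hl : 1 ≤ lam) (hq : q = p ^ lam)
    (k : ℕ) (m n : ℕ → ℕ) (hm : ∀ i, m i < q) (hn : ∀ i, n i < q)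
    (hge : ∑ i ∈ Finset.range k, n i * q ^ i ≤ ∑ i ∈ Finset.range k, m i * q ^ i) :
    (((∑ i ∈ Finset.range k, m i * q ^ i).choose (∑ i ∈ Finset.range k, n i * q ^ i) : ZMod p)) =
      ∏ i ∈ Finset.range k, ((m i).choose (n i) : ZMod p) := by
  clear hge
  induction k generalizing m n with
  | zero => simp
  | succ k ih =>
    have hsum : ∀ f : ℕ → ℕ, ∑ i ∈ Finset.range (k+1), f i * q ^ i =
        (∑ i ∈ Finset.range k, f (i+1) * q ^ i) * q + f 0 := by
      intro f
      rw [Finset.sum_range_succ', Finset.sum_mul]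
      congr 1
      · exact Finset.sum_congr rfl fun i _ => by ring
      · simp
    rw [hsum m, hsum n, Finset.prod_range_succ',
      lucas_step p lam q hp hl hq _ _ _ _ (hm 0) (hn 0),
      ih (fun i => m (i+1)) (fun i => n (i+1)) (fun i => hm _) (fun i => hn _)]
end

section
/- Let F be a field of characteristic p containing 𝔽_q, q = p^λ, and let E = {e_t(x)} be a sequence of 𝔽_q-linear (additive) polynomials. For i with base-q digits i = Σ_t i_t q^t define p_{E,i}(x) := Π_t e_t(x)^{i_t}. Then the sequence {p_{E,i}} satisfies the binomial identity p_{E,n}(x+y) = Σ_{i=0}^n C(n,i) p_{E,i}(x) p_{E,n-i}(y). -/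
open Finset Polynomial

/-- The Carlitz construction: for `i = ∑ i_t q^t` base `q`, `p_{E,i}(x) = ∏_t e_t(x)^{i_t}`. -/
noncomputable def carlitzPoly {F : Type*} [Field F] (q : ℕ) (e : ℕ → Polynomial F) (i : ℕ) : Polynomial F :=
  ∏ t ∈ Finset.range (i + 1), e t ^ (i / q ^ t % q)

/-- `f` is an `𝔽_q`-linear polynomial: a finite linear combination of the monomials `x^{q^n}`. -/
def IsLinearPoly {F : Type*} [Field F] (q : ℕ) (f : Polynomial F) : Prop :=
  ∃ c : ℕ →₀ F, f = c.sum fun n a => Polynomial.C a * Polynomial.X ^ q ^ n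

/-! ### Auxiliary lemmas -/

/-- Lucas' theorem for a prime power base `p ^ lam`, stated as a congruence mod `p`. -/
lemma lucasAux_pow {p : ℕ} (hp : p.Prime) (lam : ℕ) (n k : ℕ) :
    Nat.choose n k ≡ Nat.choose (n % p ^ lam) (k % p ^ lam) *
      Nat.choose (n / p ^ lam) (k / p ^ lam) [MOD p] := by
  haveI : Fact p.Prime := ⟨hp⟩
  induction lam generalizing n k with
  | zero => simpa [Nat.mod_one] using Nat.ModEq.refl (n.choose k)
  | succ l ih =>
    have hdvd : p ∣ p ^ (l + 1) := dvd_pow_self p (Nat.succ_ne_zero l)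
    have hmod : ∀ a : ℕ, a % p ^ (l + 1) % p = a % p := fun a => Nat.mod_mod_of_dvd a hdvd
    have hdiv : ∀ a : ℕ, a % p ^ (l + 1) / p = a / p % p ^ l := fun a => by
      rw [pow_succ']; exact Nat.mod_mul_right_div_self a p (p ^ l)
    calc Nat.choose n k
        ≡ Nat.choose (n % p) (k % p) * Nat.choose (n / p) (k / p) [MOD p] :=
          Choose.choose_modEq_choose_mod_mul_choose_div_nat
      _ ≡ Nat.choose (n % p) (k % p) * (Nat.choose (n / p % p ^ l) (k / p % p ^ l) *
            Nat.choose (n / p / p ^ l) (k / p / p ^ l)) [MOD p] :=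
          Nat.ModEq.mul_left _ (ih _ _)
      _ = (Nat.choose (n % p ^ (l + 1) % p) (k % p ^ (l + 1) % p) *
            Nat.choose (n % p ^ (l + 1) / p) (k % p ^ (l + 1) / p)) *
            Nat.choose (n / p ^ (l + 1)) (k / p ^ (l + 1)) := by
          rw [hmod, hmod, hdiv, hdiv, Nat.div_div_eq_div_mul, Nat.div_div_eq_div_mul,
            ← pow_succ']
          ring
      _ ≡ Nat.choose (n % p ^ (l + 1)) (k % p ^ (l + 1)) *
            Nat.choose (n / p ^ (l + 1)) (k / p ^ (l + 1)) [MOD p] :=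
          Nat.ModEq.mul_right _ Choose.choose_modEq_choose_mod_mul_choose_div_nat.symm

/-- Reindexing a sum over `range (a * b)` as a double sum. -/
lemma sumRangeMulAux {M : Type*} [AddCommMonoid M] (f : ℕ → M) (a b : ℕ) :
    ∑ i ∈ Finset.range (a * b), f i =
      ∑ j ∈ Finset.range b, ∑ s ∈ Finset.range a, f (a * j + s) := by
  induction b with
  | zero => simp
  | succ b ih =>
    rw [Nat.mul_succ, Finset.sum_range_add, ih, Finset.sum_range_succ]

/-- Digit-product over a large range truncates. -/
lemma prodDigitsExtAux {R : Type*} [CommMonoid R] {q : ℕ} (hq : 2 ≤ q) (x : ℕ → R)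
    {i N : ℕ} (h : i < N) :
    ∏ t ∈ Finset.range N, x t ^ (i / q ^ t % q) =
      ∏ t ∈ Finset.range (i + 1), x t ^ (i / q ^ t % q) := by
  refine (Finset.prod_subset (Finset.range_subset_range.mpr h) ?_).symm
  intro t ht hnt
  simp only [Finset.mem_range, not_lt] at ht hnt
  have h2 : i < 2 ^ t := lt_of_lt_of_le (lt_of_lt_of_le (Nat.lt_succ_self i)
    (le_trans hnt (le_of_lt (Nat.lt_two_pow_self (n := t))))) (le_refl _)
  have hiq : i < q ^ t := lt_of_lt_of_le h2 (Nat.pow_le_pow_left hq t)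
  rw [Nat.div_eq_of_lt hiq]
  simp

/-- The core combinatorial identity, by induction on the number of base-`q` digits. -/
lemma coreAux {R : Type*} [CommRing R] {q : ℕ} (hq2 : 2 ≤ q)
    (hcast : ∀ n k : ℕ, ((n.choose k : ℕ) : R) =
      (((n % q).choose (k % q) : ℕ) : R) * (((n / q).choose (k / q) : ℕ) : R)) :
    ∀ (N : ℕ) (A B : ℕ → R) (n : ℕ), n < q ^ N →
      ∏ t ∈ Finset.range N, (A t + B t) ^ (n / q ^ t % q) =
        ∑ i ∈ Finset.range (n + 1), (n.choose i : R) *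
          (∏ t ∈ Finset.range N, A t ^ (i / q ^ t % q)) *
          (∏ t ∈ Finset.range N, B t ^ ((n - i) / q ^ t % q)) := by
  have hq0 : 0 < q := lt_of_lt_of_le (by norm_num) hq2
  intro N
  induction N with
  | zero =>
    intro A B n hn
    simp only [pow_zero, Nat.lt_one_iff] at hn
    subst hn
    simp
  | succ N ih =>
    intro A B n hn
    set r := n % q with hr
    set m := n / q with hm
    have hnm : q * m + r = n := by rw [hr, hm, mul_comm]; exact Nat.div_add_mod' n q
    have hrq : r < q := Nat.mod_lt n hq0
    have hmN : m < q ^ N := by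
      rw [hm]
      apply Nat.div_lt_of_lt_mul
      rw [mul_comm, ← pow_succ]
      exact hn
    -- LHS
    have lhs_eq : ∏ t ∈ Finset.range (N + 1), (A t + B t) ^ (n / q ^ t % q) =
        (∏ t ∈ Finset.range N, (A (t + 1) + B (t + 1)) ^ (m / q ^ t % q)) *
          (A 0 + B 0) ^ r := by
      rw [Finset.prod_range_succ']
      congr 1
      · apply Finset.prod_congr rfl
        intro t _
        congr 1
        rw [pow_succ', ← Nat.div_div_eq_div_mul, ← hm]
      · congr 1
        simp [hr]
    rw [lhs_eq, ih (fun t => A (t + 1)) (fun t => B (t + 1)) m hmN]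
    -- expand (A 0 + B 0) ^ r as a sum over range q
    have hbin : (A 0 + B 0) ^ r =
        ∑ s ∈ Finset.range q, (r.choose s : R) * A 0 ^ s * B 0 ^ (r - s) := by
      rw [add_pow]
      rw [show (∑ s ∈ Finset.range q, (r.choose s : R) * A 0 ^ s * B 0 ^ (r - s)) =
          ∑ s ∈ Finset.range (r + 1), (r.choose s : R) * A 0 ^ s * B 0 ^ (r - s) from
        (Finset.sum_subset (Finset.range_subset_range.mpr hrq) (by
          intro s hs hns
          simp only [Finset.mem_range, not_lt] at hns
          rw [Nat.choose_eq_zero_of_lt hns]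
          simp)).symm]
      apply Finset.sum_congr rfl
      intro s _
      ring
    rw [hbin, Finset.sum_mul_sum]
    -- RHS : extend to range (q * (m+1)) and reindex
    have hle : n + 1 ≤ q * (m + 1) := by
      have h2 : q * (m + 1) = q * m + q := by ring
      omega
    rw [show (∑ i ∈ Finset.range (n + 1), (n.choose i : R) *
          (∏ t ∈ Finset.range (N + 1), A t ^ (i / q ^ t % q)) *
          (∏ t ∈ Finset.range (N + 1), B t ^ ((n - i) / q ^ t % q))) =
        ∑ i ∈ Finset.range (q * (m + 1)), (n.choose i : R) *
          (∏ t ∈ Finset.range (N + 1), A t ^ (i / q ^ t % q)) *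
          (∏ t ∈ Finset.range (N + 1), B t ^ ((n - i) / q ^ t % q)) from ?_]
    · rw [sumRangeMulAux]
      apply Finset.sum_congr rfl
      intro j hj
      apply Finset.sum_congr rfl
      intro s hs
      simp only [Finset.mem_range] at hj hs
      have hjm : j ≤ m := Nat.lt_succ_iff.mp hj
      have hsq : s < q := hs
      -- digits of i = q*j + s
      have hiq : (q * j + s) % q = s := by
        rw [Nat.mul_add_mod, Nat.mod_eq_of_lt hsq]
      have hidiv : (q * j + s) / q = j := by
        rw [Nat.mul_add_div hq0, Nat.div_eq_of_lt hsq, add_zero]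
      -- Lucas cast
      have hch : ((n.choose (q * j + s) : ℕ) : R) =
          ((r.choose s : ℕ) : R) * ((m.choose j : ℕ) : R) := by
        rw [hcast n (q * j + s), hiq, hidiv, ← hr, ← hm]
      by_cases hsr : s ≤ r
      · -- the matching case
        have hsub : n - (q * j + s) = q * (m - j) + (r - s) := by
          have h1 : q * (m - j) = q * m - q * j := Nat.mul_sub_left_distrib q m j
          have h2 : q * j ≤ q * m := Nat.mul_le_mul_left q hjm
          omega
        have hrs : r - s < q := lt_of_le_of_lt (Nat.sub_le r s) hrq
        have hmq : (n - (q * j + s)) % q = r - s := by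
          rw [hsub, Nat.mul_add_mod, Nat.mod_eq_of_lt hrs]
        have hmdiv : (n - (q * j + s)) / q = m - j := by
          rw [hsub, Nat.mul_add_div hq0, Nat.div_eq_of_lt hrs, add_zero]
        rw [hch]
        rw [Finset.prod_range_succ' (fun t => A t ^ ((q * j + s) / q ^ t % q)),
          Finset.prod_range_succ' (fun t => B t ^ ((n - (q * j + s)) / q ^ t % q))]
        simp only [pow_zero, Nat.div_one, hiq, hmq]
        have hA : ∀ t, (q * j + s) / q ^ (t + 1) % q = j / q ^ t % q := by
          intro t
          rw [pow_succ', ← Nat.div_div_eq_div_mul, hidiv]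
        have hB : ∀ t, (n - (q * j + s)) / q ^ (t + 1) % q = (m - j) / q ^ t % q := by
          intro t
          rw [pow_succ', ← Nat.div_div_eq_div_mul, hmdiv]
        simp only [hA, hB]
        ring
      · -- vanishing case: s > r
        push_neg at hsr
        have h0 : (r.choose s : ℕ) = 0 := Nat.choose_eq_zero_of_lt hsr
        rw [hch, h0]
        simp
    · refine Finset.sum_subset (Finset.range_subset_range.mpr hle) ?_
      intro i hi hni
      simp only [Finset.mem_range, not_lt] at hni
      rw [Nat.choose_eq_zero_of_lt (by omega)]
      simp

/-- The Carlitz construction from a sequence of `𝔽_q`-linear polynomials yields a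
binomial-type sequence. -/
theorem stmt7 {F : Type*} [Field F] (p lam q : ℕ) (hp : p.Prime) [CharP F p]
    (hl : 1 ≤ lam) (hq : q = p ^ lam)
    (e : ℕ → Polynomial F) (he : ∀ t, IsLinearPoly q (e t)) :
    IsBinomialSeq (carlitzPoly q e) := by
  haveI : Fact p.Prime := ⟨hp⟩
  set R := MvPolynomial (Fin 2) F
  have hq2 : 2 ≤ q := by
    rw [hq]
    calc 2 ≤ p := hp.two_le
      _ ≤ p ^ lam := Nat.le_self_pow (by omega) p
  -- casting Lucas to R
  have hcast : ∀ n k : ℕ, ((n.choose k : ℕ) : R) =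
      (((n % q).choose (k % q) : ℕ) : R) * (((n / q).choose (k / q) : ℕ) : R) := by
    intro n k
    have := lucasAux_pow hp lam n k
    rw [← hq] at this
    have h2 := CharP.natCast_eq_natCast' (R := R) (p := p) this
    rw [h2, Nat.cast_mul]
  -- frobenius additivity for linear polynomials
  set X0 : R := MvPolynomial.X 0
  set X1 : R := MvPolynomial.X 1
  have hadd : ∀ t, Polynomial.aeval (X0 + X1) (e t) =
      Polynomial.aeval X0 (e t) + Polynomial.aeval X1 (e t) := by
    intro t
    obtain ⟨c, hc⟩ := he t
    rw [hc]
    rw [Finsupp.sum]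
    simp only [map_sum, map_mul, map_pow, Polynomial.aeval_C, Polynomial.aeval_X]
    rw [← Finset.sum_add_distrib]
    apply Finset.sum_congr rfl
    intro k _
    have hfrob : (X0 + X1) ^ q ^ k = X0 ^ q ^ k + X1 ^ q ^ k := by
      rw [hq, ← pow_mul, add_pow_char_pow]
    rw [hfrob, mul_add]
  -- evaluation of carlitzPoly
  have heval : ∀ (z : R) (i : ℕ), Polynomial.aeval z (carlitzPoly q e i) =
      ∏ t ∈ Finset.range (i + 1), (Polynomial.aeval z (e t)) ^ (i / q ^ t % q) := by
    intro z i
    rw [carlitzPoly, map_prod]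
    simp only [map_pow]
  intro n
  have hn : n < q ^ (n + 1) := by
    calc n < 2 ^ n := Nat.lt_two_pow_self (n := n)
      _ ≤ 2 ^ (n + 1) := Nat.pow_le_pow_right (by norm_num) (Nat.le_succ n)
      _ ≤ q ^ (n + 1) := Nat.pow_le_pow_left hq2 (n + 1)
  rw [heval]
  have key := coreAux hq2 hcast (n + 1)
    (fun t => Polynomial.aeval X0 (e t)) (fun t => Polynomial.aeval X1 (e t)) n hn
  calc ∏ t ∈ Finset.range (n + 1), (Polynomial.aeval (X0 + X1) (e t)) ^ (n / q ^ t % q)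
      = ∏ t ∈ Finset.range (n + 1),
          (Polynomial.aeval X0 (e t) + Polynomial.aeval X1 (e t)) ^ (n / q ^ t % q) := by
        apply Finset.prod_congr rfl
        intro t _
        rw [hadd]
    _ = ∑ i ∈ Finset.range (n + 1), (n.choose i : R) *
          (∏ t ∈ Finset.range (n + 1), (Polynomial.aeval X0 (e t)) ^ (i / q ^ t % q)) *
          (∏ t ∈ Finset.range (n + 1), (Polynomial.aeval X1 (e t)) ^ ((n - i) / q ^ t % q)) :=
        key
    _ = ∑ i ∈ Finset.range (n + 1), (n.choose i : R) *
          Polynomial.aeval X0 (carlitzPoly q e i) *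
          Polynomial.aeval X1 (carlitzPoly q e (n - i)) := by
        apply Finset.sum_congr rfl
        intro i hi
        simp only [Finset.mem_range] at hi
        rw [heval, heval, prodDigitsExtAux hq2 _ hi,
          prodDigitsExtAux hq2 _ (show n - i < n + 1 by omega)]
end

section
/- Let F be a field of characteristic p containing 𝔽_q, and let ℓ_q(i) denote the sum of the base-q digits of i. Then the sequence {x^{ℓ_q(i)}}_{i≥0} in F[x] satisfies the binomial identity (x+y)^{ℓ_q(n)} = Σ_{i=0}^n C(n,i) x^{ℓ_q(i)} y^{ℓ_q(n-i)} in F[x,y]. -/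
open Finset Polynomial

/-- Iterated Lucas: `C(n,k) ≡ C(n % p^λ, k % p^λ) * C(n / p^λ, k / p^λ) mod p`. -/
theorem lucas_pow {p : ℕ} (hp : p.Prime) (lam : ℕ) (n k : ℕ) :
    n.choose k ≡ (n % p ^ lam).choose (k % p ^ lam) * (n / p ^ lam).choose (k / p ^ lam)
      [MOD p] := by
  haveI : Fact p.Prime := ⟨hp⟩
  induction lam generalizing n k with
  | zero => simpa [Nat.mod_one] using Nat.ModEq.refl (n.choose k)
  | succ l ih =>
    have base := Choose.choose_modEq_choose_mod_mul_choose_div_nat (n := n) (k := k) (p := p)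
    have step := ih (n / p) (k / p)
    have base2 := Choose.choose_modEq_choose_mod_mul_choose_div_nat
      (n := n % p ^ (l + 1)) (k := k % p ^ (l + 1)) (p := p)
    have hmod : ∀ a : ℕ, a % p ^ (l + 1) % p = a % p := fun a =>
      Nat.mod_mod_of_dvd a (dvd_pow_self p (Nat.succ_ne_zero l))
    have hdiv : ∀ a : ℕ, a % p ^ (l + 1) / p = a / p % p ^ l := fun a => by
      rw [pow_succ, mul_comm, ← Nat.mod_mul_right_div_self]
    have hdd : ∀ a : ℕ, a / p / p ^ l = a / p ^ (l + 1) := fun a => by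
      rw [Nat.div_div_eq_div_mul, pow_succ, mul_comm]
    calc n.choose k ≡ (n % p).choose (k % p) * ((n / p).choose (k / p)) [MOD p] := base
      _ ≡ (n % p).choose (k % p) *
          ((n / p % p ^ l).choose (k / p % p ^ l) * ((n / p / p ^ l).choose (k / p / p ^ l)))
          [MOD p] := Nat.ModEq.mul_left _ step
      _ = ((n % p ^ (l + 1) % p).choose (k % p ^ (l + 1) % p) *
          (n % p ^ (l + 1) / p).choose (k % p ^ (l + 1) / p)) *
          (n / p ^ (l + 1)).choose (k / p ^ (l + 1)) := by
            rw [hmod, hmod, hdiv, hdiv, hdd, hdd]; ring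
      _ ≡ (n % p ^ (l + 1)).choose (k % p ^ (l + 1)) * (n / p ^ (l + 1)).choose (k / p ^ (l + 1))
          [MOD p] := Nat.ModEq.mul_right _ base2.symm

/-- Digit sum recursion. -/
theorem digitsum_q_mul_add {q : ℕ} (hq : 2 ≤ q) (m b : ℕ) (hb : b < q) :
    (Nat.digits q (q * m + b)).sum = b + (Nat.digits q m).sum := by
  rcases Nat.eq_zero_or_pos (q * m + b) with h | h
  · have hm : m = 0 := by
      rcases Nat.eq_zero_or_pos m with h' | h'
      · exact h'
      · exfalso; nlinarith
    have hb0 : b = 0 := by omega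
    simp [hm, hb0]
  · rw [Nat.digits_def' (by omega : 1 < q) h]
    have h1 : (q * m + b) % q = b := by
      rw [Nat.mul_add_mod]; exact Nat.mod_eq_of_lt hb
    have h2 : (q * m + b) / q = m := by
      rw [Nat.mul_add_div (by omega : 0 < q), Nat.div_eq_of_lt hb]; omega
    rw [h1, h2]; simp

/-- Digit sum of a number below the base. -/
theorem digitsum_small {q : ℕ} (hq : 2 ≤ q) {i : ℕ} (hi : i < q) :
    (Nat.digits q i).sum = i := by
  rcases Nat.eq_zero_or_pos i with h | h
  · simp [h]
  · rw [Nat.digits_def' (by omega : 1 < q) h, Nat.mod_eq_of_lt hi, Nat.div_eq_of_lt hi]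
    simp

/-- Key computation in any commutative ring of characteristic `p`. -/
theorem key_binomial {R : Type*} [CommRing R] (p lam q : ℕ) (hp : p.Prime) [CharP R p]
    (hl : 1 ≤ lam) (hq : q = p ^ lam) (x y : R) (n : ℕ) :
    (x + y) ^ (Nat.digits q n).sum =
      ∑ i ∈ Finset.range (n + 1), (n.choose i : R) *
        x ^ (Nat.digits q i).sum * y ^ (Nat.digits q (n - i)).sum := by
  have hq2 : 2 ≤ q := by
    calc 2 ≤ p := hp.two_le
    _ = p ^ 1 := (pow_one p).symm
    _ ≤ p ^ lam := Nat.pow_le_pow_right hp.pos hl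
    _ = q := hq.symm
  induction n using Nat.strong_induction_on with
  | _ n ih =>
  by_cases hn : n < q
  · -- base case: n < q
    rw [digitsum_small hq2 hn, add_pow]
    refine Finset.sum_congr rfl fun i hi => ?_
    rw [Finset.mem_range] at hi
    rw [digitsum_small hq2 (by omega : i < q), digitsum_small hq2 (by omega : n - i < q)]
    ring
  · push_neg at hn
    set m := n / q with hmdef
    set b := n % q with hbdef
    have hnm : n = q * m + b := by rw [hmdef, hbdef]; exact (Nat.div_add_mod n q).symm
    have hb : b < q := Nat.mod_lt _ (by omega)
    have hmn : m < n := Nat.div_lt_self (by omega) (by omega)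
    have hLn : (Nat.digits q n).sum = b + (Nat.digits q m).sum := by
      conv_lhs => rw [hnm]
      exact digitsum_q_mul_add hq2 m b hb
    -- Lucas for casts
    have lucas : ∀ i : ℕ, (n.choose i : R) = ((m.choose (i / q) * b.choose (i % q) : ℕ) : R) := by
      intro i
      apply (CharP.natCast_eq_natCast R p).mpr
      have h := lucas_pow hp lam n i
      rw [← hq] at h
      rw [← hmdef, ← hbdef] at h
      simpa [mul_comm] using h
    -- transform RHS
    have hsub : Finset.range (n + 1) ⊆ Finset.range (q * (m + 1)) := by
      apply Finset.range_subset_range.mpr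
      have : q * (m + 1) = q * m + q := by ring
      omega
    have e1 : ∑ i ∈ Finset.range (n + 1), (n.choose i : R) *
          x ^ (Nat.digits q i).sum * y ^ (Nat.digits q (n - i)).sum
        = ∑ i ∈ Finset.range (q * (m + 1)), (n.choose i : R) *
          x ^ (Nat.digits q i).sum * y ^ (Nat.digits q (n - i)).sum := by
      apply Finset.sum_subset hsub
      intro i _ hi
      rw [Finset.mem_range, not_lt] at hi
      rw [Nat.choose_eq_zero_of_lt (by omega : n < i)]
      simp
    have e2 : ∑ i ∈ Finset.range (q * (m + 1)), (n.choose i : R) *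
          x ^ (Nat.digits q i).sum * y ^ (Nat.digits q (n - i)).sum
        = ∑ z ∈ Finset.range (m + 1) ×ˢ Finset.range q,
            (n.choose (q * z.1 + z.2) : R) * x ^ (Nat.digits q (q * z.1 + z.2)).sum *
              y ^ (Nat.digits q (n - (q * z.1 + z.2))).sum := by
      apply Finset.sum_nbij' (fun i => (i / q, i % q)) (fun z => q * z.1 + z.2)
      · intro a ha
        rw [Finset.mem_range] at ha
        rw [Finset.mem_product, Finset.mem_range, Finset.mem_range]
        constructor
        · exact Nat.lt_of_mul_lt_mul_left (by calc q * (a / q) ≤ a := Nat.mul_div_le a q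
            _ < q * (m+1) := ha)
        · exact Nat.mod_lt _ (by omega)
      · intro z hz
        rw [Finset.mem_product, Finset.mem_range, Finset.mem_range] at hz
        rw [Finset.mem_range]
        have : q * z.1 + q ≤ q * (m + 1) := by
          have : q * z.1 + q = q * (z.1 + 1) := by ring
          rw [this]
          exact Nat.mul_le_mul_left q (by omega)
        omega
      · intro a _; exact Nat.div_add_mod a q
      · intro z hz
        rw [Finset.mem_product, Finset.mem_range, Finset.mem_range] at hz
        have h1 : (q * z.1 + z.2) / q = z.1 := by
          rw [Nat.mul_add_div (by omega : 0 < q), Nat.div_eq_of_lt hz.2]; omega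
        have h2 : (q * z.1 + z.2) % q = z.2 := by
          rw [Nat.mul_add_mod]; exact Nat.mod_eq_of_lt hz.2
        rw [h1, h2]
      · intro a _
        rw [Nat.div_add_mod]
    rw [e1, e2, Finset.sum_product]
    -- trim inner sums to range (b+1)
    have e3 : ∀ s ∈ Finset.range (m + 1),
        (∑ c ∈ Finset.range q, (n.choose (q * s + c) : R) *
            x ^ (Nat.digits q (q * s + c)).sum * y ^ (Nat.digits q (n - (q * s + c))).sum)
        = ∑ c ∈ Finset.range (b + 1), (n.choose (q * s + c) : R) *
            x ^ (Nat.digits q (q * s + c)).sum *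
            y ^ (Nat.digits q (n - (q * s + c))).sum := by
      intro s _
      symm
      apply Finset.sum_subset (Finset.range_subset_range.mpr (by omega))
      intro c _ hc
      rw [Finset.mem_range, not_lt] at hc
      have h2 : (q * s + c) % q = c := by
        rw [Nat.mul_add_mod]
        exact Nat.mod_eq_of_lt (by rw [Finset.mem_range] at *; omega)
      rw [lucas, h2, Nat.choose_eq_zero_of_lt (by omega : b < c)]
      simp
    rw [Finset.sum_congr rfl e3]
    -- now compute both sides
    rw [hLn, pow_add, add_pow, ih m hmn, Finset.sum_mul_sum, Finset.sum_comm]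
    refine Finset.sum_congr rfl fun s hs => Finset.sum_congr rfl fun c hc => ?_
    rw [Finset.mem_range] at hs hc
    have hsm : s ≤ m := by omega
    have hcb : c ≤ b := by omega
    have h1 : (q * s + c) / q = s := by
      rw [Nat.mul_add_div (by omega : 0 < q), Nat.div_eq_of_lt (by omega)]; omega
    have h2 : (q * s + c) % q = c := by
      rw [Nat.mul_add_mod]; exact Nat.mod_eq_of_lt (by omega)
    have hL1 : (Nat.digits q (q * s + c)).sum = c + (Nat.digits q s).sum :=
      digitsum_q_mul_add hq2 s c (by omega)
    have haux : q * (m - s) + q * s = q * m := by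
      rw [← Nat.mul_add]; congr 1; omega
    have hsubeq : n - (q * s + c) = q * (m - s) + (b - c) := by omega
    have hL2 : (Nat.digits q (n - (q * s + c))).sum
        = (b - c) + (Nat.digits q (m - s)).sum := by
      rw [hsubeq]; exact digitsum_q_mul_add hq2 (m - s) (b - c) (by omega)
    rw [lucas, h1, h2, hL1, hL2, pow_add, pow_add]
    push_cast
    ring

/-- The sequence `{x^{ℓ_q(i)}}`, with `ℓ_q(i)` the base-`q` digit sum, is of binomial type
in characteristic `p` (`q = p^λ`). -/
theorem stmt8 {F : Type*} [Field F] (p lam q : ℕ) (hp : p.Prime) [CharP F p]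
    (hl : 1 ≤ lam) (hq : q = p ^ lam) :
    IsBinomialSeq (fun i => (Polynomial.X : Polynomial F) ^ (Nat.digits q i).sum) := by
  intro n
  simp only [map_pow, Polynomial.aeval_X]
  exact key_binomial p lam q hp hl hq _ _ n
end

section
/- With notation as in the Carlitz construction, let E = {e_t} be a sequence of 𝔽_q-linear polynomials and −E = {−e_t}. Then f_{P_E}(x)·f_{P_{−E}}(x) = 1 in F[x]{{𝔇}}, i.e., the generating series of the Carlitz sequence built from −E is the multiplicative inverse of that built from E. -/
open Finset Polynomial

section CarlitzAux

private lemma carlitz_mod_split {q : ℕ} (m t : ℕ) :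
    m % q ^ (t + 1) = q ^ t * (m / q ^ t % q) + m % q ^ t := by
  rw [pow_succ, Nat.mod_mul, Nat.add_comm]

private lemma carlitz_lt_pow {q m N : ℕ} (hq2 : 2 ≤ q) (h : m ≤ N) : m < q ^ N :=
  lt_of_le_of_lt h (lt_of_lt_of_le (Nat.lt_two_pow_self (n := N)) (Nat.pow_le_pow_left hq2 N))

private lemma carlitz_digit_zero {q : ℕ} (hq2 : 2 ≤ q) {m t : ℕ} (h : m ≤ t) :
    m / q ^ t % q = 0 := by
  rw [Nat.div_eq_of_lt (carlitz_lt_pow hq2 h), Nat.zero_mod]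

private lemma carlitz_ext {F : Type*} [Field F] {q : ℕ} (hq2 : 2 ≤ q)
    (e : ℕ → Polynomial F) {m N : ℕ} (h : m ≤ N) :
    carlitzPoly q e m = ∏ t ∈ Finset.range (N + 1), e t ^ (m / q ^ t % q) := by
  unfold carlitzPoly
  refine Finset.prod_subset (Finset.range_subset_range.2 (by omega)) ?_
  intro t ht hnt
  rw [Finset.mem_range] at ht hnt
  rw [carlitz_digit_zero hq2 (by omega), pow_zero]

private lemma carlitz_no_carry {p : ℕ} (hp : p.Prime) {n i : ℕ} (hin : i ≤ n)
    (h : ¬ p ∣ n.choose i) (s : ℕ) :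
    i % p ^ s + (n - i) % p ^ s = n % p ^ s := by
  rcases Nat.eq_zero_or_pos s with rfl | hs
  · simp [Nat.mod_one]
  have hps : 0 < p ^ s := pow_pos hp.pos s
  have hlt : i % p ^ s + (n - i) % p ^ s < p ^ s := by
    set b := max (s + 1) (Nat.log p n + 1) with hb
    have hlog : Nat.log p n < b := lt_of_lt_of_le (Nat.lt_succ_self _) (le_max_right _ _)
    have hm : emultiplicity p (n.choose i) = 0 := emultiplicity_eq_zero.2 h
    rw [Nat.Prime.emultiplicity_choose hp hin hlog] at hm
    have hcard : ({j ∈ Finset.Ico 1 b | p ^ j ≤ i % p ^ j + (n - i) % p ^ j} : Finset ℕ).card = 0 := by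
      exact_mod_cast hm
    have hmem : s ∉ ({j ∈ Finset.Ico 1 b | p ^ j ≤ i % p ^ j + (n - i) % p ^ j} : Finset ℕ) := by
      rw [Finset.card_eq_zero] at hcard
      simp [hcard]
    by_contra hc
    push_neg at hc
    exact hmem (Finset.mem_filter.2 ⟨Finset.mem_Ico.2 ⟨hs, lt_of_lt_of_le (Nat.lt_succ_self _)
      (le_max_left _ _)⟩, hc⟩)
  have hmod : (i % p ^ s + (n - i) % p ^ s) % p ^ s = n % p ^ s := by
    rw [← Nat.add_mod]
    congr 1
    omega
  rw [Nat.mod_eq_of_lt hlt] at hmod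
  exact hmod

private lemma carlitz_digit_add {p lam q : ℕ} (hp : p.Prime) (hq : q = p ^ lam)
    {n i : ℕ} (hin : i ≤ n) (h : ¬ p ∣ n.choose i) (t : ℕ) :
    i / q ^ t % q + (n - i) / q ^ t % q = n / q ^ t % q := by
  have hqp : ∀ u : ℕ, q ^ u = p ^ (lam * u) := fun u => by rw [hq, ← pow_mul]
  have h1 := carlitz_no_carry hp hin h (lam * t)
  have h2 := carlitz_no_carry hp hin h (lam * (t + 1))
  rw [← hqp] at h1 h2
  rw [carlitz_mod_split i t, carlitz_mod_split (n - i) t, carlitz_mod_split n t] at h2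
  have hq0 : 0 < q ^ t := by rw [hqp]; exact pow_pos hp.pos _
  refine Nat.eq_of_mul_eq_mul_left hq0 ?_
  rw [Nat.mul_add]
  omega

private lemma carlitz_neg_one_pow {F : Type*} [Field F] {p lam q : ℕ} (hp : p.Prime)
    [CharP F p] (hq : q = p ^ lam) (hq2 : 2 ≤ q) {j N : ℕ} (hj : j ≤ N) :
    (-1 : Polynomial F) ^ (∑ t ∈ Finset.range (N + 1), j / q ^ t % q) = (-1) ^ j := by
  haveI : Fact p.Prime := ⟨hp⟩
  have hneg : ∀ u : ℕ, (-1 : Polynomial F) ^ q ^ u = -1 := by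
    intro u
    rw [hq, ← pow_mul]
    exact neg_one_pow_char_pow (Polynomial F) p (lam * u)
  have key : ∀ m : ℕ,
      (-1 : Polynomial F) ^ (∑ t ∈ Finset.range m, j / q ^ t % q) = (-1) ^ (j % q ^ m) := by
    intro m
    induction m with
    | zero => simp [Nat.mod_one]
    | succ m ih =>
      rw [Finset.sum_range_succ, pow_add, ih, carlitz_mod_split j m, pow_add, pow_mul,
        hneg m, mul_comm]
  rw [key (N + 1), Nat.mod_eq_of_lt (carlitz_lt_pow hq2 (by omega))]

private lemma carlitz_neg {F : Type*} [Field F] (q : ℕ) (e : ℕ → Polynomial F) (j : ℕ) :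
    carlitzPoly q (fun t => -(e t)) j =
      (-1) ^ (∑ t ∈ Finset.range (j + 1), j / q ^ t % q) * carlitzPoly q e j := by
  unfold carlitzPoly
  rw [← Finset.prod_pow_eq_pow_sum, ← Finset.prod_mul_distrib]
  refine Finset.prod_congr rfl fun t _ => ?_
  rw [neg_pow]

private lemma carlitz_alt_sum {n : ℕ} (hn : n ≠ 0) :
    (∑ i ∈ Finset.range (n + 1), (-1 : ℤ) ^ (n - i) * n.choose i) = 0 := by
  have h1 : (∑ i ∈ Finset.range (n + 1), (-1 : ℤ) ^ (n - i) * n.choose i) =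
      ∑ i ∈ Finset.range (n + 1), (fun j : ℕ => (-1 : ℤ) ^ j * n.choose (n - j)) (n - i) := by
    refine Finset.sum_congr rfl fun i hi => ?_
    rw [Finset.mem_range] at hi
    simp only []
    rw [Nat.sub_sub_self (by omega)]
  rw [h1]
  have h2 := Finset.sum_range_reflect (fun j : ℕ => (-1 : ℤ) ^ j * n.choose (n - j)) (n + 1)
  simp only [Nat.add_sub_cancel] at h2
  rw [h2]
  have h3 : (∑ i ∈ Finset.range (n + 1), (-1 : ℤ) ^ i * n.choose (n - i)) =
      ∑ i ∈ Finset.range (n + 1), (-1 : ℤ) ^ i * n.choose i := by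
    refine Finset.sum_congr rfl fun i hi => ?_
    rw [Finset.mem_range] at hi
    rw [Nat.choose_symm (by omega : i ≤ n)]
  rw [h3, Int.alternating_sum_range_choose, if_neg hn]

end CarlitzAux

/-- The Carlitz generating series of `-E` is the multiplicative inverse of that of `E`:
`f_{P_E} · f_{P_{-E}} = 1` in `F[x]{{𝔇}}`. -/
theorem stmt11 {F : Type*} [Field F] (p lam q : ℕ) (hp : p.Prime) [CharP F p]
    (hl : 1 ≤ lam) (hq : q = p ^ lam)
    (e : ℕ → Polynomial F) (he : ∀ t, IsLinearPoly q (e t)) :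
    ∀ n, dpMul (carlitzPoly q e) (carlitzPoly q fun t => -(e t)) n =
      dpOne (Polynomial F) n := by
  intro n
  haveI : Fact p.Prime := ⟨hp⟩
  have hq2 : 2 ≤ q := by
    calc 2 ≤ p := hp.two_le
    _ = p ^ 1 := (pow_one p).symm
    _ ≤ p ^ lam := Nat.pow_le_pow_right hp.pos hl
    _ = q := hq.symm
  rcases Nat.eq_zero_or_pos n with rfl | hn
  · simp [dpMul, dpOne, carlitzPoly]
  · rw [dpMul, dpOne]
    rw [if_neg (by omega)]
    set Pn : Polynomial F := ∏ t ∈ Finset.range (n + 1), e t ^ (n / q ^ t % q) with hPn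
    have key : ∀ i ∈ Finset.range (n + 1),
        (n.choose i : Polynomial F) * carlitzPoly q e i *
          carlitzPoly q (fun t => -(e t)) (n - i) =
        (((-1 : ℤ) ^ (n - i) * n.choose i : ℤ) : Polynomial F) * Pn := by
      intro i hi
      rw [Finset.mem_range] at hi
      have hin : i ≤ n := by omega
      by_cases hdvd : p ∣ n.choose i
      · have hz : (n.choose i : Polynomial F) = 0 :=
          (CharP.cast_eq_zero_iff (Polynomial F) p _).2 hdvd
        push_cast
        rw [hz]
        ring
      · rw [carlitz_neg, carlitz_neg_one_pow hp hq hq2 (le_refl (n - i)),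
          carlitz_ext hq2 e hin, carlitz_ext hq2 e (Nat.sub_le n i)]
        push_cast
        have hprod : (∏ t ∈ Finset.range (n + 1), e t ^ (i / q ^ t % q)) *
            ∏ t ∈ Finset.range (n + 1), e t ^ ((n - i) / q ^ t % q) = Pn := by
          rw [← Finset.prod_mul_distrib, hPn]
          refine Finset.prod_congr rfl fun t _ => ?_
          rw [← pow_add, carlitz_digit_add hp hq hin hdvd t]
        calc (n.choose i : Polynomial F) *
              (∏ t ∈ Finset.range (n + 1), e t ^ (i / q ^ t % q)) *
              ((-1) ^ (n - i) * ∏ t ∈ Finset.range (n + 1), e t ^ ((n - i) / q ^ t % q))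
            = (-1) ^ (n - i) * (n.choose i : Polynomial F) *
              ((∏ t ∈ Finset.range (n + 1), e t ^ (i / q ^ t % q)) *
                ∏ t ∈ Finset.range (n + 1), e t ^ ((n - i) / q ^ t % q)) := by ring
          _ = (-1) ^ (n - i) * (n.choose i : Polynomial F) * Pn := by rw [hprod]
          _ = _ := by ring
    rw [Finset.sum_congr rfl key, ← Finset.sum_mul, ← Int.cast_sum,
      carlitz_alt_sum (by omega : n ≠ 0)]
    simp
end

section
/- Let σ be a permutation of ℕ and define σ_*: ℕ → ℕ on base-q expansions by σ_*(Σ_i y_i q^i) = Σ_i y_i q^{σ(i)}. Then in characteristic p (q a power of p), the map Σ a_j 𝔇_j ↦ Σ a_j 𝔇_{σ_* j} is a ring automorphism of R{{𝔇}}; in particular C(σ_* m + σ_* n, σ_* n) ≡ C(m+n, n) (mod p) whenever the base-q additions m + n and σ_* m + σ_* n are compatible via Lucas. -/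
open Finset Polynomial

/-- The digit-permutation map `σ_* (∑ y_i q^i) = ∑ y_i q^{σ(i)}`. -/
def sigmaStar (q : ℕ) (sig : Equiv.Perm ℕ) (n : ℕ) : ℕ :=
  ∑ i ∈ Finset.range (n + 1), (n / q ^ i % q) * q ^ sig i

namespace S17

def dg (q i n : ℕ) : ℕ := n / q ^ i % q

variable {p lam q : ℕ}

lemma dg_lt (hq2 : 2 ≤ q) (i n : ℕ) : dg q i n < q := Nat.mod_lt _ (by omega)

lemma dg_eq_zero {i n : ℕ} (h : n < q ^ i) : dg q i n = 0 := by
  simp [dg, Nat.div_eq_of_lt h]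

lemma lt_q_pow (hq2 : 2 ≤ q) {x N : ℕ} (h : x ≤ N) : x < q ^ N :=
  lt_of_le_of_lt h (Nat.lt_pow_self (n := N) (by omega))

lemma dg_eq_zero_of_lt (hq2 : 2 ≤ q) {i n : ℕ} (h : n < i) : dg q i n = 0 :=
  dg_eq_zero (lt_q_pow hq2 (by omega))

lemma mod_pow_eq_sum (hq2 : 2 ≤ q) (n N : ℕ) :
    n % q ^ N = ∑ i ∈ Finset.range N, dg q i n * q ^ i := by
  induction N with
  | zero => simp [Nat.mod_one]
  | succ N ih =>
    rw [Finset.sum_range_succ, ← ih, Nat.mod_pow_succ, dg, mul_comm]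

lemma eq_sum_dg (hq2 : 2 ≤ q) {n N : ℕ} (h : n < q ^ N) :
    n = ∑ i ∈ Finset.range N, dg q i n * q ^ i := by
  rw [← mod_pow_eq_sum hq2, Nat.mod_eq_of_lt h]

lemma build_lt (hq2 : 2 ≤ q) (g : ℕ → ℕ) (hg : ∀ i, g i < q) (N : ℕ) :
    ∑ i ∈ Finset.range N, g i * q ^ i < q ^ N := by
  induction N with
  | zero => simp
  | succ N ih =>
    rw [Finset.sum_range_succ, pow_succ]
    have := hg N
    nlinarith [pow_pos (show 0 < q by omega) N]

lemma dg_build (hq2 : 2 ≤ q) (g : ℕ → ℕ) (hg : ∀ i, g i < q) (N j : ℕ) :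
    dg q j (∑ i ∈ Finset.range N, g i * q ^ i) = if j < N then g j else 0 := by
  split_ifs with hj
  · have hsplit : ∑ i ∈ Finset.range N, g i * q ^ i =
        (∑ i ∈ Finset.range j, g i * q ^ i) + q ^ j * (g j + q *
          (∑ t ∈ Finset.range (N - (j + 1)), g (j + 1 + t) * q ^ t)) := by
      rw [← Finset.sum_range_add_sum_Ico _ (show j + 1 ≤ N by omega),
        Finset.sum_range_succ, Finset.sum_Ico_eq_sum_range]
      have : ∀ t, g (j + 1 + t) * q ^ (j + 1 + t) = q ^ j * (q * (g (j + 1 + t) * q ^ t)) := by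
        intro t; rw [pow_add, pow_succ]; ring
      rw [Finset.sum_congr rfl (fun t _ => this t), ← Finset.mul_sum, ← Finset.mul_sum]
      ring
    rw [hsplit, dg, Nat.add_mul_div_left _ _ (pow_pos (show 0 < q by omega) j),
      Nat.div_eq_of_lt (build_lt hq2 g hg j), zero_add, Nat.add_mul_mod_self_left,
      Nat.mod_eq_of_lt (hg j)]
  · exact dg_eq_zero (lt_of_lt_of_le (build_lt hq2 g hg N)
      (Nat.pow_le_pow_right (by omega) (by omega)))

lemma sigmaStar_eq_build (hq2 : 2 ≤ q) (sig : Equiv.Perm ℕ) (n N : ℕ)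
    (hN : ∀ i ≤ n, sig i < N) :
    sigmaStar q sig n = ∑ j ∈ Finset.range N, dg q (sig.symm j) n * q ^ j := by
  rw [sigmaStar]
  rw [← Finset.sum_subset (show (Finset.range (n + 1)).image sig ⊆ Finset.range N by
      intro j hj
      simp only [Finset.mem_image, Finset.mem_range] at hj ⊢
      obtain ⟨i, hi, rfl⟩ := hj
      exact hN i (by omega))
    (fun j _ hj => by
      have : ¬ (sig.symm j ≤ n) := by
        intro hle
        exact hj (Finset.mem_image.mpr ⟨sig.symm j, Finset.mem_range.mpr (by omega), by simp⟩)
      rw [dg_eq_zero_of_lt hq2 (by omega), zero_mul])]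
  rw [Finset.sum_image (fun a _ b _ h => sig.injective h)]
  exact Finset.sum_congr rfl (fun i _ => by rw [Equiv.symm_apply_apply]; rfl)

lemma dg_sigmaStar (hq2 : 2 ≤ q) (sig : Equiv.Perm ℕ) (n j : ℕ) :
    dg q j (sigmaStar q sig n) = dg q (sig.symm j) n := by
  set N := (j + 1) + ((Finset.range (n + 1)).sup sig + 1) with hN
  have hbound : ∀ i ≤ n, sig i < N := fun i hi => by
    have : sig i ≤ (Finset.range (n + 1)).sup sig :=
      Finset.le_sup (Finset.mem_range.mpr (by omega))
    omega
  rw [sigmaStar_eq_build hq2 sig n N hbound,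
    dg_build hq2 _ (fun i => dg_lt hq2 _ _) N j, if_pos (by omega)]

lemma dg_ext (hq2 : 2 ≤ q) {m n : ℕ} (h : ∀ i, dg q i m = dg q i n) : m = n := by
  set N := max m n + 1 with hN
  have hm : m < q ^ N := lt_q_pow hq2 (by omega)
  have hn : n < q ^ N := lt_q_pow hq2 (by omega)
  rw [eq_sum_dg hq2 hm, eq_sum_dg hq2 hn]
  exact Finset.sum_congr rfl (fun i _ => by rw [h i])

lemma sigmaStar_symm_apply (hq2 : 2 ≤ q) (sig : Equiv.Perm ℕ) (n : ℕ) :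
    sigmaStar q sig.symm (sigmaStar q sig n) = n := by
  apply dg_ext hq2
  intro i
  rw [dg_sigmaStar hq2, Equiv.symm_symm, dg_sigmaStar hq2, Equiv.symm_apply_apply]

lemma sigmaStar_apply_symm (hq2 : 2 ≤ q) (sig : Equiv.Perm ℕ) (n : ℕ) :
    sigmaStar q sig (sigmaStar q sig.symm n) = n := by
  have := sigmaStar_symm_apply hq2 sig.symm n
  rwa [Equiv.symm_symm] at this

lemma sigmaStar_bijective (hq2 : 2 ≤ q) (sig : Equiv.Perm ℕ) :
    Function.Bijective (sigmaStar q sig) :=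
  Function.bijective_iff_has_inverse.mpr
    ⟨sigmaStar q sig.symm, sigmaStar_symm_apply hq2 sig, sigmaStar_apply_symm hq2 sig⟩

open Nat in
lemma lucas_step (hp : p.Prime) (hq : q = p ^ lam) (n k : ℕ) :
    (n.choose k : ZMod p) = ((n / q).choose (k / q) : ZMod p) * ((n % q).choose (k % q) : ZMod p) := by
  haveI : Fact p.Prime := ⟨hp⟩
  have hq0 : 0 < q := by subst hq; exact Nat.pow_pos hp.pos
  have decompose : ((X : (ZMod p)[X]) + 1) ^ n = (X + 1) ^ (n % q) * (X ^ q + 1) ^ (n / q) := by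
    subst hq
    conv_lhs => rw [← Nat.mod_add_div n (p ^ lam), pow_add, pow_mul, add_pow_char_pow]
    simp
  rw [mul_comm, ← coeff_X_add_one_pow (ZMod p) n k, decompose]
  simp only [add_pow, one_pow, mul_one, ← pow_mul, sum_mul_sum]
  conv_lhs =>
    enter [1, 2, k, 2, k']
    rw [← mul_assoc, mul_right_comm _ _ (X ^ (q * k')), ← pow_add, mul_assoc, ← cast_mul]
  have h_iff : ∀ x ∈ range (n % q + 1) ×ˢ range (n / q + 1),
      k = x.1 + q * x.2 ↔ (k % q, k / q) = x := by
    intro ⟨x₁, x₂⟩ hx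
    rw [Prod.mk.injEq]
    constructor <;> intro h
    · simp only [mem_product, mem_range] at hx
      have h' : x₁ < q := lt_of_lt_of_le hx.left <| mod_lt _ hq0
      rw [h, add_mul_mod_self_left, add_mul_div_left _ _ hq0, eq_comm (b := x₂)]
      exact ⟨mod_eq_of_lt h', right_eq_add.mpr (div_eq_of_lt h')⟩
    · rw [← h.left, ← h.right, mod_add_div]
  simp only [finset_sum_coeff, coeff_mul_natCast, coeff_X_pow, ite_mul, zero_mul, ← cast_mul]
  rw [← sum_product', sum_congr rfl (fun a ha ↦ if_congr (h_iff a ha) rfl rfl), sum_ite_eq]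
  split_ifs with h
  · simp
  · rw [mem_product, mem_range, mem_range, not_and_or, lt_succ, not_le, not_lt] at h
    cases h <;> simp [choose_eq_zero_of_lt (by tauto)]

lemma hq2_of (hp : p.Prime) (hq : q = p ^ lam) (hl : 1 ≤ lam) : 2 ≤ q := by
  subst hq
  calc 2 ≤ p := hp.two_le
    _ = p ^ 1 := (pow_one p).symm
    _ ≤ p ^ lam := Nat.pow_le_pow_right hp.pos hl

lemma choose_carry_zero (hp : p.Prime) (hq : q = p ^ lam) {a b : ℕ}
    (ha : a < q) (hb : b < q) (hcar : q ≤ a + b) :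
    ((a + b).choose b : ZMod p) = 0 := by
  have hq0 : 0 < q := by omega
  rw [lucas_step hp hq]
  have h1 : (a + b) % q = a + b - q := by
    rw [Nat.mod_eq_sub_mod hcar, Nat.mod_eq_of_lt (by omega)]
  have h2 : b % q = b := Nat.mod_eq_of_lt hb
  rw [h1, h2, Nat.choose_eq_zero_of_lt (show a + b - q < b by omega), Nat.cast_zero, mul_zero]

lemma choose_add_digits (hp : p.Prime) (hq : q = p ^ lam) (hq2 : 2 ≤ q) :
    ∀ N m n, m < q ^ N → n < q ^ N →
      ((m + n).choose n : ZMod p) =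
        ∏ i ∈ Finset.range N, ((dg q i m + dg q i n).choose (dg q i n) : ZMod p) := by
  have hq0 : 0 < q := by omega
  have dgshift : ∀ (x i : ℕ), dg q i (x / q) = dg q (i + 1) x := by
    intro x i; unfold dg; rw [Nat.div_div_eq_div_mul, ← pow_succ']
  have dg0 : ∀ x : ℕ, dg q 0 x = x % q := by
    intro x; unfold dg; rw [pow_zero, Nat.div_one]
  intro N
  induction N with
  | zero =>
    intro m n hm hn
    simp only [pow_zero] at hm hn
    interval_cases m
    interval_cases n
    simp
  | succ N ih =>
    intro m n hm hn
    have hm1 : m / q < q ^ N := by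
      rw [Nat.div_lt_iff_lt_mul hq0]; rw [pow_succ] at hm; exact hm
    have hn1 : n / q < q ^ N := by
      rw [Nat.div_lt_iff_lt_mul hq0]; rw [pow_succ] at hn; exact hn
    have em := Nat.div_add_mod m q
    have en := Nat.div_add_mod n q
    have hmq : m % q < q := Nat.mod_lt _ hq0
    have hnq : n % q < q := Nat.mod_lt _ hq0
    have E : m + n = q * (m / q + n / q) + (m % q + n % q) := by
      conv_lhs => rw [← em, ← en]
      ring
    rw [lucas_step hp hq (m + n) n]
    by_cases hc : m % q + n % q < q
    · have hdiv : (m + n) / q = m / q + n / q := by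
        rw [E, Nat.mul_add_div hq0, Nat.div_eq_of_lt hc, add_zero]
      have hmod : (m + n) % q = m % q + n % q := by
        rw [E, Nat.mul_add_mod, Nat.mod_eq_of_lt hc]
      rw [hdiv, hmod, ih (m / q) (n / q) hm1 hn1, Finset.prod_range_succ']
      congr 1
      · exact Finset.prod_congr rfl (fun i _ => by simp only [dgshift])
      · simp only [dg0]
    · have hmod : (m + n) % q = m % q + n % q - q := by
        rw [Nat.add_mod, Nat.mod_eq_sub_mod (by omega), Nat.mod_eq_of_lt (by omega)]
      rw [hmod, Nat.choose_eq_zero_of_lt (show m % q + n % q - q < n % q by omega), Nat.cast_zero, mul_zero]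
      symm
      apply Finset.prod_eq_zero (Finset.mem_range.mpr (Nat.succ_pos N))
      show ((dg q 0 m + dg q 0 n).choose (dg q 0 n) : ZMod p) = 0
      rw [dg0, dg0]
      exact choose_carry_zero hp hq hmq hnq (by omega)

lemma choose_zero_of_carry (hp : p.Prime) (hq : q = p ^ lam) (hq2 : 2 ≤ q) {m n : ℕ}
    (i : ℕ) (h : q ≤ dg q i m + dg q i n) :
    ((m + n).choose n : ZMod p) = 0 := by
  set N := max (i + 1) (max m n + 1) with hNdef
  rw [choose_add_digits hp hq hq2 N m n (lt_q_pow hq2 (by omega)) (lt_q_pow hq2 (by omega))]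
  apply Finset.prod_eq_zero (Finset.mem_range.mpr (show i < N by omega))
  exact choose_carry_zero hp hq (dg_lt hq2 i m) (dg_lt hq2 i n) h

/-- carry-free addition in base q -/
def CF (q m n : ℕ) : Prop := ∀ i, dg q i m + dg q i n < q

lemma dg_add (hq2 : 2 ≤ q) {m n : ℕ} (h : CF q m n) (i : ℕ) :
    dg q i (m + n) = dg q i m + dg q i n := by
  set N := max m n + 1 with hNdef
  have hm : m < q ^ N := lt_q_pow hq2 (by omega)
  have hn : n < q ^ N := lt_q_pow hq2 (by omega)
  have E : m + n = ∑ t ∈ Finset.range N, (dg q t m + dg q t n) * q ^ t := by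
    conv_lhs => rw [eq_sum_dg hq2 hm, eq_sum_dg hq2 hn]
    rw [← Finset.sum_add_distrib]
    exact Finset.sum_congr rfl (fun t _ => by ring)
  rw [E, dg_build hq2 _ h N i]
  split_ifs with hi
  · rfl
  · rw [dg_eq_zero_of_lt hq2 (show m < i by omega), dg_eq_zero_of_lt hq2 (show n < i by omega)]

lemma sigmaStar_add (hq2 : 2 ≤ q) (sig : Equiv.Perm ℕ) {m n : ℕ} (h : CF q m n) :
    sigmaStar q sig (m + n) = sigmaStar q sig m + sigmaStar q sig n := by
  have hcf' : CF q (sigmaStar q sig m) (sigmaStar q sig n) := fun t => by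
    rw [dg_sigmaStar hq2, dg_sigmaStar hq2]; exact h _
  apply dg_ext hq2
  intro j
  rw [dg_sigmaStar hq2, dg_add hq2 h, dg_add hq2 hcf' j, dg_sigmaStar hq2, dg_sigmaStar hq2]

lemma part2 (hp : p.Prime) (hq : q = p ^ lam) (hl : 1 ≤ lam) (sig : Equiv.Perm ℕ) (m n : ℕ) :
    ((sigmaStar q sig m + sigmaStar q sig n).choose (sigmaStar q sig n) : ZMod p) =
      ((m + n).choose n : ZMod p) := by
  have hq2 : 2 ≤ q := hq2_of hp hq hl
  set K := max m n + 1 with hKdef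
  set N := ((Finset.range K).sup sig + 1) +
    (max (sigmaStar q sig m) (sigmaStar q sig n) + 1) with hNdef
  have hm : m < q ^ K := lt_q_pow hq2 (by omega)
  have hn : n < q ^ K := lt_q_pow hq2 (by omega)
  have hsm : sigmaStar q sig m < q ^ N := lt_q_pow hq2 (by omega)
  have hsn : sigmaStar q sig n < q ^ N := lt_q_pow hq2 (by omega)
  rw [choose_add_digits hp hq hq2 N _ _ hsm hsn, choose_add_digits hp hq hq2 K m n hm hn]
  have hterm : ∀ j : ℕ,
      ((dg q j (sigmaStar q sig m) + dg q j (sigmaStar q sig n)).choose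
        (dg q j (sigmaStar q sig n)) : ZMod p) =
      ((dg q (sig.symm j) m + dg q (sig.symm j) n).choose (dg q (sig.symm j) n) : ZMod p) := by
    intro j; rw [dg_sigmaStar hq2, dg_sigmaStar hq2]
  rw [Finset.prod_congr rfl (fun j _ => hterm j)]
  have hsub : (Finset.range K).image sig ⊆ Finset.range N := by
    intro j hj
    simp only [Finset.mem_image, Finset.mem_range] at hj ⊢
    obtain ⟨i, hi, rfl⟩ := hj
    have : sig i ≤ (Finset.range K).sup sig := Finset.le_sup (Finset.mem_range.mpr hi)
    omega
  rw [← Finset.prod_subset hsub (fun j _ hj => by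
    have hge : K ≤ sig.symm j := by
      by_contra hlt
      exact hj (Finset.mem_image.mpr ⟨sig.symm j, Finset.mem_range.mpr (by omega), by simp⟩)
    rw [dg_eq_zero_of_lt hq2 (show m < sig.symm j by omega),
      dg_eq_zero_of_lt hq2 (show n < sig.symm j by omega)]
    simp)]
  rw [Finset.prod_image (fun a _ b _ h => sig.injective h)]
  exact Finset.prod_congr rfl (fun i _ => by rw [Equiv.symm_apply_apply])

end S17

namespace S17

lemma cast_eq_cast {R : Type*} [CommRing R] (p : ℕ) [CharP R p] {x y : ℕ}
    (h : (x : ZMod p) = (y : ZMod p)) : (x : R) = (y : R) := by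
  calc (x : R) = (ZMod.castHom (dvd_refl p) R) (x : ZMod p) := (map_natCast _ x).symm
    _ = (ZMod.castHom (dvd_refl p) R) (y : ZMod p) := by rw [h]
    _ = (y : R) := map_natCast _ y

lemma cast_ne_zero {R : Type*} [CommRing R] (p : ℕ) [CharP R p] {x : ℕ}
    (h : (x : R) ≠ 0) : (x : ZMod p) ≠ 0 := by
  intro h0
  apply h
  have : (x : R) = ((0 : ℕ) : R) := cast_eq_cast p (by simpa using h0)
  simpa using this

lemma not_cf {m n i : ℕ} (hq2 : 2 ≤ q) (hmn : m ≤ n) (hcar : q ≤ dg q i m + dg q i (n - m))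
    (hp : p.Prime) (hq : q = p ^ lam) : ((n.choose m : ZMod p)) = 0 := by
  have h0 := choose_zero_of_carry hp hq hq2 i hcar
  rw [show m + (n - m) = n by omega] at h0
  rw [← Nat.choose_symm hmn]
  exact h0

lemma part3 {R : Type*} [CommRing R] (hp : p.Prime) [CharP R p]
    (hq : q = p ^ lam) (hl : 1 ≤ lam) (sig : Equiv.Perm ℕ)
    (a b ta tb : ℕ → R) (ha : ∀ j, ta (sigmaStar q sig j) = a j)
    (hb : ∀ j, tb (sigmaStar q sig j) = b j) (j : ℕ) :
    dpMul a b j = dpMul ta tb (sigmaStar q sig j) := by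
  have hq2 : 2 ≤ q := hq2_of hp hq hl
  unfold dpMul
  -- facts for nonzero terms on the source side
  have key : ∀ i, i ∈ Finset.range (j + 1) → ((j.choose i : R) * a i * b (j - i) ≠ 0) →
      CF q i (j - i) ∧ sigmaStar q sig i + sigmaStar q sig (j - i) = sigmaStar q sig j := by
    intro i hi hne
    have hij : i ≤ j := by simp only [Finset.mem_range] at hi; omega
    have hch : ((j.choose i : ZMod p)) ≠ 0 := by
      apply cast_ne_zero (R := R) p
      intro h0
      exact hne (by rw [h0, zero_mul, zero_mul])
    have hcf : CF q i (j - i) := by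
      by_contra hcf
      unfold CF at hcf
      push_neg at hcf
      obtain ⟨t, ht⟩ := hcf
      exact hch (not_cf hq2 hij ht hp hq)
    refine ⟨hcf, ?_⟩
    rw [← sigmaStar_add hq2 sig hcf, show i + (j - i) = j by omega]
  have chooseR : ∀ i, i ≤ j →
      sigmaStar q sig i + sigmaStar q sig (j - i) = sigmaStar q sig j →
      ((sigmaStar q sig j).choose (sigmaStar q sig i) : R) = (j.choose i : R) := by
    intro i hij hsum
    apply cast_eq_cast p
    have h2 := part2 hp hq hl sig (j - i) i
    rw [show (j - i) + i = j by omega,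
      show sigmaStar q sig (j - i) + sigmaStar q sig i = sigmaStar q sig j by omega] at h2
    exact h2
  refine Finset.sum_bij_ne_zero (fun i _ _ => sigmaStar q sig i) ?_ ?_ ?_ ?_
  · intro i h1 h2
    obtain ⟨-, hsum⟩ := key i h1 h2
    show sigmaStar q sig i ∈ Finset.range (sigmaStar q sig j + 1)
    exact Finset.mem_range.mpr (by omega)
  · intro i1 h11 h12 i2 h21 h22 heq
    exact (sigmaStar_bijective hq2 sig).1 heq
  · -- surjectivity onto nonzero terms
    intro k hk hgk
    have hkj : k ≤ sigmaStar q sig j := by simp only [Finset.mem_range] at hk; omega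
    have hch : (((sigmaStar q sig j).choose k : ZMod p)) ≠ 0 := by
      apply cast_ne_zero (R := R) p
      intro h0
      exact hgk (by rw [h0, zero_mul, zero_mul])
    have hcfk : CF q k (sigmaStar q sig j - k) := by
      by_contra hcf
      unfold CF at hcf
      push_neg at hcf
      obtain ⟨t, ht⟩ := hcf
      exact hch (not_cf hq2 hkj ht hp hq)
    set i0 := sigmaStar q sig.symm k with hi0def
    have hik : sigmaStar q sig i0 = k := sigmaStar_apply_symm hq2 sig k
    have hs := sigmaStar_add hq2 sig.symm hcfk
    rw [show k + (sigmaStar q sig j - k) = sigmaStar q sig j by omega,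
      sigmaStar_symm_apply hq2 sig j] at hs
    -- hs : j = i0 + (sig.symm)*(σ*j - k)
    have hij : i0 ≤ j := by omega
    have hcf0 : CF q i0 (j - i0) := by
      intro t
      have hrest : j - i0 = sigmaStar q sig.symm (sigmaStar q sig j - k) := by omega
      rw [hrest, hi0def, dg_sigmaStar hq2, dg_sigmaStar hq2, Equiv.symm_symm]
      exact hcfk (sig t)
    have hsum0 : sigmaStar q sig i0 + sigmaStar q sig (j - i0) = sigmaStar q sig j := by
      rw [← sigmaStar_add hq2 sig hcf0, show i0 + (j - i0) = j by omega]
    have hterm : (j.choose i0 : R) * a i0 * b (j - i0) =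
        ((sigmaStar q sig j).choose k : R) * ta k * tb (sigmaStar q sig j - k) := by
      rw [← hik, chooseR i0 hij hsum0, ha, show sigmaStar q sig j - sigmaStar q sig i0 =
        sigmaStar q sig (j - i0) by omega, hb]
    refine ⟨i0, Finset.mem_range.mpr (by omega), ?_, hik⟩
    show (j.choose i0 : R) * a i0 * b (j - i0) ≠ 0
    rw [hterm]
    exact hgk
  · intro i h1 h2
    obtain ⟨hcf, hsum⟩ := key i h1 h2
    have hij : i ≤ j := by simp only [Finset.mem_range] at h1; omega
    show (j.choose i : R) * a i * b (j - i) =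
      ((sigmaStar q sig j).choose (sigmaStar q sig i) : R) * ta (sigmaStar q sig i) *
        tb (sigmaStar q sig j - sigmaStar q sig i)
    rw [chooseR i hij hsum, ha, show sigmaStar q sig j - sigmaStar q sig i =
      sigmaStar q sig (j - i) by omega, hb]

end S17


/-- In characteristic `p` (`q = p^λ`), `σ_*` is a bijection of `ℕ`, satisfies
`C(σ_* m + σ_* n, σ_* n) ≡ C(m + n, n) (mod p)`, and induces a ring automorphism
`∑ a_j 𝔇_j ↦ ∑ a_j 𝔇_{σ_* j}` of `R{{𝔇}}`. -/
theorem stmt17 {R : Type*} [CommRing R] (p lam q : ℕ) (hp : p.Prime) [CharP R p]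
    (hl : 1 ≤ lam) (hq : q = p ^ lam) (sig : Equiv.Perm ℕ) :
    Function.Bijective (sigmaStar q sig) ∧
    (∀ m n : ℕ,
      (((sigmaStar q sig m + sigmaStar q sig n).choose (sigmaStar q sig n) : ZMod p)) =
        (((m + n).choose n : ZMod p))) ∧
    (∀ a b ta tb tc : ℕ → R,
      (∀ j, ta (sigmaStar q sig j) = a j) →
      (∀ j, tb (sigmaStar q sig j) = b j) →
      (∀ j, tc (sigmaStar q sig j) = dpMul a b j) →
      ∀ n, tc n = dpMul ta tb n) := by
  have hq2 : 2 ≤ q := S17.hq2_of hp hq hl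
  refine ⟨S17.sigmaStar_bijective hq2 sig, fun m n => S17.part2 hp hq hl sig m n, ?_⟩
  intro a b ta tb tc hta htb htc n
  obtain ⟨j, rfl⟩ := (S17.sigmaStar_bijective hq2 sig).2 n
  rw [htc j, S17.part3 hp hq hl sig a b ta tb hta htb j]
end
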